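/- For all integers k ≥ 2 and t ≥ 1, N(2,k,t) ≥ k(t+2) + min(t, ⌊k/2⌋). -/

import Mathlib

open Real Finset


/-- Points of `ℝ^d`. -/
abbrev Pt (d : ℕ) := EuclideanSpace ℝ (Fin d)

noncomputable instance {d : ℕ} : DecidableEq (Pt d) := Classical.decEq _

/-- `Q` is a partition of the finite set `P` into `k` parts. -/
def IsPartition {d k : ℕ} (P : Finset (Pt d)) (Q : Fin k → Finset (Pt d)) : Prop :=
  (∀ i j : Fin k, i ≠ j → Disjoint (Q i) (Q j)) ∧ P = Finset.univ.biUnion Q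

/-- The partition `Q` of `P` is `t`-tolerant: after removing any set `Y` of at most `t`
points, the convex hulls of the parts still have a common point. -/
def IsTolerant {d k : ℕ} (t : ℕ) (P : Finset (Pt d)) (Q : Fin k → Finset (Pt d)) : Prop :=
  ∀ Y ⊆ P, Y.card ≤ t →
    (⋂ i : Fin k, convexHull ℝ ((Q i \ Y : Finset (Pt d)) : Set (Pt d))).Nonempty

noncomputable def mk2 (a b : ℝ) : Pt 2 := WithLp.toLp 2 ![a, b]

@[simp] lemma mk2_zero (a b : ℝ) : mk2 a b 0 = a := rfl
@[simp] lemma mk2_one (a b : ℝ) : mk2 a b 1 = b := rfl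

noncomputable def ept (θ : ℝ) : Pt 2 := mk2 (Real.cos θ) (Real.sin θ)

noncomputable def dotψ (ψ : ℝ) (x : Pt 2) : ℝ := Real.cos ψ * x 0 + Real.sin ψ * x 1

lemma dot_lin (ψ : ℝ) : IsLinearMap ℝ (dotψ ψ) := by
  constructor
  · intro x y
    show Real.cos ψ * (x 0 + y 0) + Real.sin ψ * (x 1 + y 1) = _
    unfold dotψ; ring
  · intro c x
    show Real.cos ψ * (c * x 0) + Real.sin ψ * (c * x 1) = _
    unfold dotψ; simp; ring

lemma dot_ept (ψ θ : ℝ) : dotψ ψ (ept θ) = Real.cos (θ - ψ) := by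
  unfold dotψ ept
  rw [Real.cos_sub]; simp [mk2]; ring

lemma sep_disjoint (X Y : Finset (Pt 2)) (ψ c : ℝ)
    (hX : ∀ p ∈ X, dotψ ψ p < c) (hY : ∀ p ∈ Y, c < dotψ ψ p) :
    convexHull ℝ (X : Set (Pt 2)) ∩ convexHull ℝ (Y : Set (Pt 2)) = ∅ := by
  apply Set.eq_empty_iff_forall_notMem.2
  intro p hp
  have h1 : p ∈ {w : Pt 2 | dotψ ψ w < c} :=
    convexHull_min (fun q hq => hX q (by exact_mod_cast hq)) (convex_halfSpace_lt (dot_lin ψ) c) hp.1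
  have h2 : p ∈ {w : Pt 2 | c < dotψ ψ w} :=
    convexHull_min (fun q hq => hY q (by exact_mod_cast hq)) (convex_halfSpace_gt (dot_lin ψ) c) hp.2
  simp only [Set.mem_setOf_eq] at h1 h2
  linarith

lemma kill {k t : ℕ} {S : Finset (Pt 2)} {Q : Fin k → Finset (Pt 2)}
    (htol : IsTolerant t S Q) (Y : Finset (Pt 2)) (hYS : Y ⊆ S) (hYc : Y.card ≤ t)
    (i j : Fin k) (ψ c : ℝ)
    (hi : ∀ p ∈ Q i \ Y, dotψ ψ p < c) (hj : ∀ p ∈ Q j \ Y, c < dotψ ψ p) : False := by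
  obtain ⟨p, hp⟩ := htol Y hYS hYc
  simp only [Set.mem_iInter] at hp
  have := sep_disjoint (Q i \ Y) (Q j \ Y) ψ c hi hj
  exact Set.eq_empty_iff_forall_notMem.1 this p ⟨hp i, hp j⟩

lemma cap_in (N lo hi y : ℕ) (hN : 0 < N) (h1 : lo ≤ y) (h2 : y ≤ hi) (h3 : hi + 1 ≤ lo + N) :
    Real.cos (((hi:ℝ) + 1 - lo) * π / N) < Real.cos (((2*y:ℝ) - lo - hi) * π / N) := by
  have hNR : (0:ℝ) < N := by exact_mod_cast hN
  have hπN : 0 < π / N := div_pos Real.pi_pos hNR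
  have habs : |((2*y:ℝ) - lo - hi)| ≤ (hi:ℝ) - lo := by
    rw [abs_le]
    constructor <;> [skip; skip] <;>
    · have c1 : (lo:ℝ) ≤ y := by exact_mod_cast h1
      have c2 : (y:ℝ) ≤ hi := by exact_mod_cast h2
      linarith
  have key : Real.cos (((2*y:ℝ) - lo - hi) * π / N) = Real.cos (|((2*y:ℝ) - lo - hi)| * (π / N)) := by
    rw [mul_div_assoc, ← Real.cos_abs ((((2:ℝ)*y) - lo - hi) * (π / N)), abs_mul, abs_of_pos hπN]
  rw [key]
  have hlt : |((2*y:ℝ) - lo - hi)| * (π / N) < ((hi:ℝ) + 1 - lo) * (π / N) := by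
    apply mul_lt_mul_of_pos_right _ hπN
    linarith
  have hle : ((hi:ℝ) + 1 - lo) * (π / N) ≤ π := by
    have : ((hi:ℝ) + 1 - lo) ≤ N := by
      have h3' : ((hi:ℝ)) + 1 ≤ (lo:ℝ) + N := by exact_mod_cast h3
      linarith
    calc ((hi:ℝ) + 1 - lo) * (π / N) ≤ (N:ℝ) * (π / N) := by
          apply mul_le_mul_of_nonneg_right this (le_of_lt hπN)
      _ = π := by field_simp
  have hfin := Real.cos_lt_cos_of_nonneg_of_le_pi (mul_nonneg (abs_nonneg ((2*(y:ℝ)) - lo - hi)) (le_of_lt hπN)) hle hlt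
  calc Real.cos (((hi:ℝ) + 1 - lo) * π / N) = Real.cos (((hi:ℝ) + 1 - lo) * (π/N)) := by rw [mul_div_assoc]
    _ < _ := hfin

lemma cap_out (N lo hi y : ℕ) (hN : 0 < N) (h0 : lo ≤ hi) (h1 : hi < y) (h2 : y + 1 ≤ lo + N) :
    Real.cos (((2*y:ℝ) - lo - hi) * π / N) < Real.cos (((hi:ℝ) + 1 - lo) * π / N) := by
  have hNR : (0:ℝ) < N := by exact_mod_cast hN
  have hπN : 0 < π / N := div_pos Real.pi_pos hNR
  have c0 : (lo:ℝ) ≤ hi := by exact_mod_cast h0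
  have c1 : (hi:ℝ) + 1 ≤ y := by exact_mod_cast h1
  have c2 : (y:ℝ) + 1 ≤ lo + N := by exact_mod_cast h2
  set a := ((2*y:ℝ) - lo - hi) * (π / N) with ha
  have hlen0 : (0:ℝ) ≤ ((hi:ℝ) + 1 - lo) := by linarith
  have hlenlt : ((hi:ℝ) + 1 - lo) * (π/N) < a := by
    apply mul_lt_mul_of_pos_right _ hπN; linarith
  have haup : a ≤ (2*(N:ℝ) - ((hi:ℝ) + 1 - lo) - 1) * (π/N) := by
    apply mul_le_mul_of_nonneg_right _ (le_of_lt hπN); linarith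
  have h2π : (2*(N:ℝ)) * (π/N) = 2*π := by field_simp
  rw [mul_div_assoc, mul_div_assoc, ← ha]
  rcases le_or_gt a π with hc | hc
  · exact Real.cos_lt_cos_of_nonneg_of_le_pi (by positivity) hc hlenlt
  · have : Real.cos a = Real.cos (2*π - a) := (Real.cos_two_pi_sub a).symm
    rw [this]
    apply Real.cos_lt_cos_of_nonneg_of_le_pi (by positivity) (by linarith)
    have : ((hi:ℝ) + 1 - lo) * (π/N) + a ≤ 2 * π := by
      calc ((hi:ℝ) + 1 - lo) * (π/N) + a ≤ ((hi:ℝ) + 1 - lo) * (π/N) + (2*(N:ℝ) - ((hi:ℝ) + 1 - lo) - 1) * (π/N) := by linarith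
        _ = (2*(N:ℝ)) * (π/N) - (π/N) := by ring
        _ ≤ 2*π := by rw [h2π]; linarith
    linarith

lemma cap_c_big (N lenn : ℕ) (hN : 0 < N) (hl1 : 1 ≤ lenn) (hlen : 2*lenn + 1 ≤ N) :
    Real.sin (π/(2*N)) ≤ Real.cos ((lenn:ℝ) * π / N) := by
  have hNR : (0:ℝ) < N := by exact_mod_cast hN
  have hπN : 0 < π / N := div_pos Real.pi_pos hNR
  have hle : (lenn:ℝ) * π / N ≤ π/2 - π/(2*N) := by
    have : (2*(lenn:ℝ) + 1) ≤ N := by exact_mod_cast hlen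
    rw [mul_div_assoc]
    have e : π/2 - π/(2*N) = ((N:ℝ) - 1) * (π / N) / 2 := by field_simp
    rw [e]
    have : (lenn:ℝ) ≤ ((N:ℝ) - 1)/2 := by linarith
    calc (lenn:ℝ) * (π/N) ≤ (((N:ℝ)-1)/2) * (π/N) := mul_le_mul_of_nonneg_right this (le_of_lt hπN)
      _ = ((N:ℝ) - 1) * (π / N) / 2 := by ring
  have h1 : Real.cos (π/2 - π/(2*N)) ≤ Real.cos ((lenn:ℝ) * π / N) := by
    apply Real.cos_le_cos_of_nonneg_of_le_pi (by positivity) _ hle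
    have : π/2 - π/(2*(N:ℝ)) ≤ π/2 := by
      have : 0 < π/(2*(N:ℝ)) := by positivity
      linarith
    linarith [Real.pi_pos]
  rw [Real.cos_pi_div_two_sub] at h1
  exact h1



lemma cos_mod (N j : ℕ) (ψ : ℝ) :
    Real.cos (2*π*((j % N : ℕ):ℝ)/N - ψ) = Real.cos (2*π*(j:ℝ)/N - ψ) := by
  rcases Nat.eq_zero_or_pos N with h0 | hN
  · subst h0; simp
  have hNR : (0:ℝ) < N := by exact_mod_cast hN
  set q := j / N with hq
  set r := j % N with hr
  have hj : (j:ℝ) = (r:ℝ) + (q:ℝ) * N := by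
    have h : r + N * q = j := Nat.mod_add_div j N
    have h' : (r:ℝ) + (N:ℝ) * (q:ℝ) = (j:ℝ) := by exact_mod_cast congrArg (Nat.cast (R := ℝ)) h
    linarith
  conv_rhs => rw [hj]
  have harg : 2*π*((r:ℝ) + (q:ℝ) * N)/N - ψ
      = (2*π*(r:ℝ)/N - ψ) + ((q:ℤ):ℝ) * (2*π) := by
    push_cast; field_simp; ring
  rw [harg, Real.cos_add_int_mul_two_pi]

lemma cos_lt_one_of_ne (N a b : ℕ) (hN : 0 < N) (ha : a < N) (hb : b < N) (hab : a ≠ b) :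
    Real.cos (2*π*(a:ℝ)/N - 2*π*(b:ℝ)/N) < 1 := by
  have hNR : (0:ℝ) < N := by exact_mod_cast hN
  rcases lt_or_eq_of_le (Real.cos_le_one (2*π*(a:ℝ)/N - 2*π*(b:ℝ)/N)) with h | h
  · exact h
  exfalso
  obtain ⟨n, hn⟩ := (Real.cos_eq_one_iff _).1 h
  have hπ : (0:ℝ) < π := Real.pi_pos
  have key : (n:ℝ) * N = (a:ℝ) - b := by
    have : (n:ℝ) * (2*π) = 2*π*(a:ℝ)/N - 2*π*(b:ℝ)/N := hn
    field_simp at this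
    nlinarith [this]
  have habs : |(a:ℝ) - b| < N := by
    rw [abs_lt]
    constructor
    · have : (b:ℝ) < N := by exact_mod_cast hb
      have : (0:ℝ) ≤ a := by positivity
      linarith
    · have : (a:ℝ) < N := by exact_mod_cast ha
      have : (0:ℝ) ≤ b := by positivity
      linarith
  have hn0 : n ≠ 0 := by
    intro h0
    subst h0
    simp at key
    have : (a:ℝ) = b := by linarith
    exact hab (by exact_mod_cast this)
  have : (1:ℝ) ≤ |(n:ℝ)| := by
    have : (1:ℤ) ≤ |n| := Int.one_le_abs hn0
    exact_mod_cast this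
  have hNle : (N:ℝ) ≤ |(n:ℝ)| * N := le_mul_of_one_le_left (le_of_lt hNR) this
  have heq2 : |(a:ℝ) - b| = |(n:ℝ)| * N := by
    rw [← key, abs_mul, abs_of_pos hNR]
  linarith

lemma adj_pair (N : ℕ) (Ax Bx : Finset ℕ) (hBsub : Bx ⊆ range N)
    (hdis : ∀ x ∈ Ax, x ∉ Bx) (htop : N - 1 ∈ Ax) (hcard : Ax.card < Bx.card) :
    ∃ u w, u < w ∧ w < N ∧ u ∈ Bx ∧ w ∈ Bx ∧
      (∀ a ∈ Ax, ¬(u ≤ a ∧ a ≤ w)) ∧ (∀ b ∈ Bx, ¬(u < b ∧ b < w)) := by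
  classical
  set g : ℕ → ℕ := fun b =>
    if h : (Ax.filter (fun a => b ≤ a)).Nonempty then (Ax.filter (fun a => b ≤ a)).min' h else 0
    with hg
  have hgmem : ∀ b ∈ Bx, g b ∈ Ax.filter (fun a => b ≤ a) := by
    intro b hb
    have hne : (Ax.filter (fun a => b ≤ a)).Nonempty := by
      refine ⟨N-1, mem_filter.2 ⟨htop, ?_⟩⟩
      have := mem_range.1 (hBsub hb); omega
    simp only [hg, dif_pos hne]
    exact min'_mem _ hne
  have hmaps : ∀ b ∈ Bx, g b ∈ Ax := fun b hb => (mem_filter.1 (hgmem b hb)).1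
  obtain ⟨x, hx, y, hy, hxy, hgxy⟩ :=
    Finset.exists_ne_map_eq_of_card_lt_of_maps_to hcard hmaps
  -- wlog x < y
  obtain ⟨b₁, b₂, hb₁, hb₂, hlt, heq⟩ : ∃ b₁ b₂, b₁ ∈ Bx ∧ b₂ ∈ Bx ∧ b₁ < b₂ ∧ g b₁ = g b₂ := by
    rcases lt_or_gt_of_ne hxy with h | h
    · exact ⟨x, y, hx, hy, h, hgxy⟩
    · exact ⟨y, x, hy, hx, h, hgxy.symm⟩
  have hAgap : ∀ a ∈ Ax, ¬(b₁ ≤ a ∧ a ≤ b₂) := by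
    intro a ha ⟨h1, h2⟩
    have hmin : g b₁ ≤ a := by
      have hne : (Ax.filter (fun a => b₁ ≤ a)).Nonempty := ⟨a, mem_filter.2 ⟨ha, h1⟩⟩
      simp only [hg, dif_pos hne]
      exact min'_le _ _ (mem_filter.2 ⟨ha, h1⟩)
    have hb2le : b₂ ≤ g b₂ := (mem_filter.1 (hgmem b₂ hb₂)).2
    have : a = b₂ := by omega
    subst this
    exact hdis a ha hb₂
  have hne2 : (Bx.filter (fun x => b₁ < x ∧ x ≤ b₂)).Nonempty :=
    ⟨b₂, mem_filter.2 ⟨hb₂, hlt, le_refl _⟩⟩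
  set w := (Bx.filter (fun x => b₁ < x ∧ x ≤ b₂)).min' hne2 with hw
  have hwmem := min'_mem _ hne2
  rw [← hw] at hwmem
  have hwB : w ∈ Bx := (mem_filter.1 hwmem).1
  have hwprop := (mem_filter.1 hwmem).2
  refine ⟨b₁, w, hwprop.1, mem_range.1 (hBsub hwB), hb₁, hwB, ?_, ?_⟩
  · intro a ha ⟨h1, h2⟩
    exact hAgap a ha ⟨h1, le_trans h2 hwprop.2⟩
  · intro b hb ⟨h1, h2⟩
    have : w ≤ b := by
      apply min'_le
      exact mem_filter.2 ⟨hb, h1, le_trans (le_of_lt h2) hwprop.2⟩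
    omega

set_option maxHeartbeats 4000000 in
/-- Parameter-free form of Theorem 2: for all `k ≥ 2` and `t ≥ 1`,
`N(2,k,t) ≥ k(t+2) + min(t, ⌊k/2⌋)`, witnessed by a planar set of
`k(t+2) + min(t, ⌊k/2⌋) - 1` points with no `t`-tolerant partition into `k` parts. -/
theorem lower_bound_N2kt_min (k t : ℕ) (hk : 2 ≤ k) (ht : 1 ≤ t) :
    ∃ S : Finset (Pt 2), S.card = k * (t + 2) + min t (k / 2) - 1 ∧
      ∀ Q : Fin k → Finset (Pt 2), IsPartition S Q → ¬ IsTolerant t S Q := by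
  classical
  set m := min t (k/2) with hm
  have hm1 : 1 ≤ m := by omega
  have hmt : m ≤ t := by omega
  have hmk : 2*m ≤ k := by omega
  have hktm : 2*m ≤ k*t := by
    calc 2*m ≤ 2*t := by omega
    _ ≤ k*t := Nat.mul_le_mul_right t hk
  have h6 : 6 ≤ k*(t+2) := by
    calc 6 = 2*3 := rfl
    _ ≤ k*(t+2) := Nat.mul_le_mul hk (by omega)
  set N := k*(t+2) - 1 with hNdef
  have hNk : N + 1 = k*(t+2) := by omega
  have hN5 : 5 ≤ N := by omega
  have hN0 : 0 < N := by omega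
  have hNR : (0:ℝ) < N := by exact_mod_cast hN0
  have hsinpos : 0 < Real.sin (π/(2*N)) := by
    apply Real.sin_pos_of_pos_of_lt_pi
    · positivity
    · have hN5R : (5:ℝ) ≤ N := by exact_mod_cast hN5
      have h1 : π/(2*(N:ℝ)) ≤ π/2 := by
        apply div_le_div_of_nonneg_left (le_of_lt Real.pi_pos) (by norm_num)
        linarith
      linarith [Real.pi_pos]
  set ε := Real.sin (π/(2*N)) / 2 with hε
  have hεpos : 0 < ε := by positivity
  have hεlt : ε < Real.sin (π/(2*N)) := by rw [hε]; linarith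
  have hε1 : ε < 1 := by
    have := Real.sin_le_one (π/(2*(N:ℝ)))
    rw [hε]; linarith
  set cp : ℕ → Pt 2 := fun j => ept (2*π*j/N) with hcp
  set dp : ℕ → Pt 2 := fun l => mk2 (ε*(l+1)/(t+2)) 0 with hdp
  have hdotc : ∀ (j:ℕ) (ψ:ℝ), dotψ ψ (cp j) = Real.cos (2*π*(j:ℝ)/N - ψ) := by
    intro j ψ; rw [hcp]; exact dot_ept ψ _
  have hdotd : ∀ (l:ℕ) (ψ:ℝ), l < m → |dotψ ψ (dp l)| < ε := by
    intro l ψ hl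
    have hrw : dotψ ψ (dp l) = Real.cos ψ * (ε*((l:ℝ)+1)/((t:ℝ)+2)) := by
      rw [hdp]; unfold dotψ; simp [mk2]
    rw [hrw]
    have hv : 0 ≤ ε*((l:ℝ)+1)/((t:ℝ)+2) := by positivity
    have hvlt : ε*((l:ℝ)+1)/((t:ℝ)+2) < ε := by
      rw [div_lt_iff₀ (by positivity)]
      have hc : ((l:ℝ)+1) < (t:ℝ)+2 := by
        have : l + 1 < t+2 := by omega
        exact_mod_cast this
      nlinarith [hεpos]
    calc |Real.cos ψ * (ε*((l:ℝ)+1)/((t:ℝ)+2))| = |Real.cos ψ| * (ε*((l:ℝ)+1)/((t:ℝ)+2)) := by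
          rw [abs_mul, abs_of_nonneg hv]
      _ ≤ 1 * (ε*((l:ℝ)+1)/((t:ℝ)+2)) := mul_le_mul_of_nonneg_right (Real.abs_cos_le_one ψ) hv
      _ < ε := by linarith
  have hcpself : ∀ j : ℕ, dotψ (2*π*(j:ℝ)/N) (cp j) = 1 := by
    intro j; rw [hdotc]; simp
  have hcpother : ∀ a b : ℕ, a < N → b < N → a ≠ b → dotψ (2*π*(b:ℝ)/N) (cp a) < 1 := by
    intro a b ha hb hab; rw [hdotc]; exact cos_lt_one_of_ne N a b hN0 ha hb hab
  have hcpinj : ∀ a b : ℕ, a < N → b < N → cp a = cp b → a = b := by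
    intro a b ha hb he
    by_contra hne
    have h1 := hcpother a b ha hb hne
    rw [he, hcpself] at h1; exact lt_irrefl _ h1
  have hcpdp : ∀ j l : ℕ, j < N → l < m → cp j ≠ dp l := by
    intro j l hj hl he
    have h1 := hcpself j
    rw [he] at h1
    have h2 := hdotd l (2*π*(j:ℝ)/N) hl
    rw [h1] at h2
    simp at h2
    linarith
  have hdpmono : ∀ x y : ℕ, x < y → ε*((x:ℝ)+1)/((t:ℝ)+2) < ε*((y:ℝ)+1)/((t:ℝ)+2) := by
    intro x y hxy
    have hxy' : ((x:ℝ)+1) < ((y:ℝ)+1) := by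
      have : (x:ℝ) < y := by exact_mod_cast hxy
      linarith
    have ht2 : (0:ℝ) < (t:ℝ)+2 := by positivity
    gcongr
  have hdpinj : ∀ a b : ℕ, a < m → b < m → dp a = dp b → a = b := by
    intro a b _ _ he
    have h0 : dp a 0 = dp b 0 := by rw [he]
    rw [hdp] at h0
    simp only [mk2_zero] at h0
    by_contra hne
    rcases Nat.lt_or_ge a b with h | h
    · exact absurd h0 (ne_of_lt (hdpmono a b h))
    · have h' : b < a := by omega
      exact absurd h0 (ne_of_gt (hdpmono b a h'))
  set CS := (range N).image cp with hCS
  set DS := (range m).image dp with hDS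
  set S := CS ∪ DS with hSdef
  have hCcard : CS.card = N := by
    rw [hCS, card_image_of_injOn, card_range]
    intro a ha b hb
    exact hcpinj a b (mem_range.1 ha) (mem_range.1 hb)
  have hDcard : DS.card = m := by
    rw [hDS, card_image_of_injOn, card_range]
    intro a ha b hb
    exact hdpinj a b (mem_range.1 ha) (mem_range.1 hb)
  have hCDdis : Disjoint CS DS := by
    rw [disjoint_left]
    intro p hpC hpD
    rw [hCS, mem_image] at hpC
    rw [hDS, mem_image] at hpD
    obtain ⟨j, hj, rfl⟩ := hpC
    obtain ⟨l, hl, he⟩ := hpD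
    exact hcpdp j l (mem_range.1 hj) (mem_range.1 hl) he.symm
  have hScard : S.card = N + m := by
    rw [hSdef, card_union_of_disjoint hCDdis, hCcard, hDcard]
  have hSmem : ∀ p ∈ S, (∃ j, j < N ∧ p = cp j) ∨ (∃ l, l < m ∧ p = dp l) := by
    intro p hp
    rcases mem_union.1 hp with h | h
    · rw [hCS, mem_image] at h
      obtain ⟨j, hj, he⟩ := h
      exact Or.inl ⟨j, mem_range.1 hj, he.symm⟩
    · rw [hDS, mem_image] at h
      obtain ⟨l, hl, he⟩ := h
      exact Or.inr ⟨l, mem_range.1 hl, he.symm⟩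
  have hcpS : ∀ j, j < N → cp j ∈ S := by
    intro j hj
    exact mem_union.2 (Or.inl (mem_image_of_mem cp (mem_range.2 hj)))
  refine ⟨S, by rw [hScard]; omega, ?_⟩
  intro Q hpart htol
  obtain ⟨hQdis, hQun⟩ := hpart
  have hQsub : ∀ i, Q i ⊆ S := by
    intro i; rw [hQun]; exact subset_biUnion_of_mem Q (mem_univ i)
  have hQmem : ∀ p ∈ S, ∃ i, p ∈ Q i := by
    intro p hp; rw [hQun] at hp
    simpa using mem_biUnion.1 hp
  have hQuniq : ∀ (p : Pt 2) (i j : Fin k), p ∈ Q i → p ∈ Q j → i = j := by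
    intro p i j hi hj; by_contra hne
    exact (disjoint_left.1 (hQdis i j hne)) hi hj
  have hsumQ : ∑ i, (Q i).card = N + m := by
    rw [← hScard, hSdef]
    rw [show CS ∪ DS = Finset.univ.biUnion Q from hSdef ▸ hQun]
    exact (card_biUnion (fun i _ j _ hij => hQdis i j hij)).symm
  have hother : ∀ i : Fin k, ∃ l : Fin k, l ≠ i := by
    intro i
    have : Nontrivial (Fin k) := Fin.nontrivial_iff_two_le.2 hk
    exact exists_ne i
  -- STEP 1 : every part has at least t+2 points
  have hbig : ∀ i, t+2 ≤ (Q i).card := by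
    intro i
    by_contra hlt'
    push_neg at hlt'
    rcases le_or_gt (Q i).card t with hle | hgt
    · obtain ⟨p, hp⟩ := htol (Q i) (hQsub i) hle
      simp only [Set.mem_iInter] at hp
      have h2 := hp i
      have h3 : ((Q i \ Q i : Finset (Pt 2)) : Set (Pt 2)) = (∅ : Set (Pt 2)) := by simp
      rw [h3, convexHull_empty] at h2
      exact h2
    · have hcard1 : (Q i).card = t+1 := by omega
      have hcirc : ∃ j, j < N ∧ cp j ∈ Q i := by
        by_contra hno
        push_neg at hno
        have hQD : Q i ⊆ DS := by
          intro p hp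
          rcases hSmem p (hQsub i hp) with ⟨j, hj, rfl⟩ | ⟨l, hl, rfl⟩
          · exact absurd hp (hno j hj)
          · exact mem_image_of_mem dp (mem_range.2 hl)
        have := card_le_card hQD
        omega
      obtain ⟨j, hj, hjQ⟩ := hcirc
      set Y := (Q i).erase (cp j) with hYdef
      have hYc : Y.card ≤ t := by rw [hYdef, card_erase_of_mem hjQ]; omega
      have hYS : Y ⊆ S := fun p hp => hQsub i (erase_subset _ _ hp)
      obtain ⟨p, hp⟩ := htol Y hYS hYc
      simp only [Set.mem_iInter] at hp
      have hpi := hp i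
      have hQiY : Q i \ Y = {cp j} := by
        rw [hYdef]
        ext q
        simp only [mem_sdiff, mem_erase, mem_singleton, not_and]
        constructor
        · rintro ⟨hq, hq2⟩
          by_contra hne
          exact (hq2 hne) hq
        · rintro rfl
          exact ⟨hjQ, fun hne _ => hne rfl⟩
      rw [hQiY] at hpi
      rw [coe_singleton, convexHull_singleton] at hpi
      obtain ⟨l, hl⟩ := hother i
      have hpl := hp l
      have hsub : ((Q l \ Y : Finset (Pt 2)) : Set (Pt 2)) ⊆ {x : Pt 2 | dotψ (2*π*(j:ℝ)/N) x < 1} := by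
        intro q hq
        have hq' : q ∈ Q l \ Y := by exact_mod_cast hq
        have hqQl : q ∈ Q l := (mem_sdiff.1 hq').1
        have hqS := hQsub l hqQl
        have hqne : q ≠ cp j := by
          intro he
          exact hl (hQuniq q l i hqQl (he ▸ hjQ))
        rcases hSmem q hqS with ⟨j', hj', rfl⟩ | ⟨l', hl', rfl⟩
        · have hne : j' ≠ j := fun h => hqne (by rw [h])
          exact hcpother j' j hj' hj hne
        · have h2 := hdotd l' (2*π*(j:ℝ)/N) hl'
          have h3 := abs_lt.1 h2
          simp only [Set.mem_setOf_eq]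
          linarith
      have hpmem : p ∈ {x : Pt 2 | dotψ (2*π*(j:ℝ)/N) x < 1} :=
        convexHull_min hsub (convex_halfSpace_lt (dot_lin _) 1) hpl
      rw [Set.mem_singleton_iff] at hpi
      rw [hpi] at hpmem
      simp only [Set.mem_setOf_eq] at hpmem
      rw [hcpself j] at hpmem
      exact lt_irrefl _ hpmem
  
  -- atoms for nonlinear arithmetic
  obtain ⟨KT, hKT⟩ : ∃ x : ℕ, x = k*t := ⟨_, rfl⟩
  have hKT2 : 2*t ≤ KT := by rw [hKT]; exact Nat.mul_le_mul_right t hk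
  have hNk' : N + 1 = KT + 2*k := by
    rw [hKT, show k*t + 2*k = k*(t+2) from by ring]
    exact hNk
  have hktm' : 2*m ≤ KT := by rw [hKT]; exact hktm
  have hkt1 : k*(t+1) = KT + k := by rw [hKT]; ring
  have hdpS : ∀ l, l < m → dp l ∈ S := by
    intro l hl
    exact mem_union.2 (Or.inr (mem_image_of_mem dp (mem_range.2 hl)))
  -- index sets (unrotated)
  set XR : Fin k → Finset ℕ := fun i => (range N).filter (fun j => cp j ∈ Q i) with hXR
  set bD : Fin k → ℕ := fun i => ((range m).filter (fun l => dp l ∈ Q i)).card with hbD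
  have hsplit : ∀ i, (Q i).card = (XR i).card + bD i := by
    intro i
    have hdecomp : Q i = ((XR i).image cp) ∪ (((range m).filter (fun l => dp l ∈ Q i)).image dp) := by
      ext p
      constructor
      · intro hp
        rcases hSmem p (hQsub i hp) with ⟨j, hj, rfl⟩ | ⟨l, hl, rfl⟩
        · refine mem_union.2 (Or.inl (mem_image_of_mem cp ?_))
          simp only [hXR, mem_filter, mem_range]
          exact ⟨hj, hp⟩
        · refine mem_union.2 (Or.inr (mem_image_of_mem dp ?_))
          simp only [mem_filter, mem_range]
          exact ⟨hl, hp⟩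
      · intro hp
        rcases mem_union.1 hp with h | h
        · obtain ⟨j, hj, rfl⟩ := mem_image.1 h
          simp only [hXR, mem_filter, mem_range] at hj
          exact hj.2
        · obtain ⟨l, hl, rfl⟩ := mem_image.1 h
          exact (mem_filter.1 hl).2
    rw [hdecomp, card_union_of_disjoint, card_image_of_injOn, card_image_of_injOn]
    · intro a ha b hb
      have ha' : a ∈ range m := (mem_filter.1 ha).1
      have hb' : b ∈ range m := (mem_filter.1 hb).1
      exact hdpinj a b (mem_range.1 ha') (mem_range.1 hb')
    · intro a ha b hb
      simp only [hXR, coe_filter, mem_range, Set.mem_setOf_eq] at ha hb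
      exact hcpinj a b ha.1 hb.1
    · rw [disjoint_left]
      intro p hp1 hp2
      obtain ⟨j, hj, rfl⟩ := mem_image.1 hp1
      obtain ⟨l, hl, he⟩ := mem_image.1 hp2
      simp only [hXR, mem_filter, mem_range] at hj
      exact hcpdp j l hj.1 (mem_range.1 (mem_filter.1 hl).1) he.symm
  have hsumXR : ∑ i, (XR i).card = N := by
    have hpart2 : range N = univ.biUnion XR := by
      ext j
      simp only [mem_biUnion, mem_univ, true_and, hXR, mem_filter, mem_range]
      constructor
      · intro hj
        obtain ⟨i, hi⟩ := hQmem (cp j) (hcpS j hj)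
        exact ⟨i, hj, hi⟩
      · rintro ⟨i, hj, _⟩; exact hj
    rw [← card_range N]
    conv_lhs => rw [show (fun i => (XR i).card) = fun i => (XR i).card from rfl]
    rw [show (range N).card = (univ.biUnion XR).card from by rw [← hpart2]]
    exact (card_biUnion (by
      intro i _ j _ hij
      rw [Function.onFun, disjoint_left]
      intro x hx1 hx2
      simp only [hXR, mem_filter, mem_range] at hx1 hx2
      exact hij (hQuniq (cp x) i j hx1.2 hx2.2))).symm
  have hsumbD : ∑ i, bD i = m := by
    have hpart2 : range m = univ.biUnion (fun i => (range m).filter (fun l => dp l ∈ Q i)) := by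
      ext l
      simp only [mem_biUnion, mem_univ, true_and, mem_filter, mem_range]
      constructor
      · intro hl
        obtain ⟨i, hi⟩ := hQmem (dp l) (hdpS l hl)
        exact ⟨i, hl, hi⟩
      · rintro ⟨i, hl, _⟩; exact hl
    have hdisj : ∀ i ∈ univ, ∀ j ∈ univ, i ≠ j →
        Disjoint ((range m).filter (fun l => dp l ∈ Q i)) ((range m).filter (fun l => dp l ∈ Q j)) := by
      intro i _ j _ hij
      rw [disjoint_left]
      intro x hx1 hx2
      exact hij (hQuniq (dp x) i j (mem_filter.1 hx1).2 (mem_filter.1 hx2).2)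
    have h2 := card_biUnion hdisj
    rw [← hpart2, card_range] at h2
    rw [hbD]
    exact h2.symm
  -- STEP 2 : a pure part B with exactly t+2 points
  have hexB : ∃ B : Fin k, bD B = 0 ∧ (Q B).card = t+2 := by
    by_contra hno
    push_neg at hno
    have key : ∑ i : Fin k, ((t+2) + (if bD i = 0 then 1 else 0)) ≤ ∑ i, (Q i).card := by
      apply sum_le_sum
      intro i _
      by_cases h : bD i = 0
      · have h2 := hno i h
        have h3 := hbig i
        simp only [h, if_true]
        omega
      · simp only [h, if_false]
        have := hbig i
        omega
    rw [sum_add_distrib, sum_const, card_univ, Fintype.card_fin, smul_eq_mul] at key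
    have hP0 : (univ.filter (fun i : Fin k => bD i = 0)).card
        = ∑ i : Fin k, (if bD i = 0 then 1 else 0) := card_filter _ _
    have hP0big : k - m ≤ (univ.filter (fun i : Fin k => bD i = 0)).card := by
      have hc1 : (univ.filter (fun i : Fin k => ¬ (bD i = 0))).card ≤ m := by
        calc (univ.filter (fun i : Fin k => ¬ (bD i = 0))).card
            = ∑ i ∈ univ.filter (fun i : Fin k => ¬ (bD i = 0)), 1 := by rw [card_eq_sum_ones]
          _ ≤ ∑ i ∈ univ.filter (fun i : Fin k => ¬ (bD i = 0)), bD i := by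
              apply sum_le_sum
              intro i hi
              have := (mem_filter.1 hi).2
              omega
          _ ≤ ∑ i, bD i := sum_le_sum_of_subset (filter_subset _ _)
          _ = m := hsumbD
      have hc2 := card_filter_add_card_filter_not (s := univ) (p := fun i : Fin k => bD i = 0)
      rw [card_univ, Fintype.card_fin] at hc2
      omega
    rw [← hP0] at key
    rw [hsumQ] at key
    have hk2 : k*(t+2) = KT + 2*k := by rw [hKT]; ring
    rw [hk2] at key
    omega
  -- STEP 3 : a part A with few circle points
  have hexA : ∃ A : Fin k, (XR A).card ≤ t+1 := by
    by_contra hno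
    push_neg at hno
    have h1 : k*(t+2) ≤ ∑ i, (XR i).card := by
      calc k*(t+2) = ∑ _i : Fin k, (t+2) := by rw [sum_const, card_univ, Fintype.card_fin, smul_eq_mul]
        _ ≤ ∑ i, (XR i).card := sum_le_sum (fun i _ => hno i)
    rw [hsumXR] at h1
    have hk2 : k*(t+2) = KT + 2*k := by rw [hKT]; ring
    rw [hk2] at h1
    omega
  obtain ⟨B, hBpure, hBQcard⟩ := hexB
  obtain ⟨A, hAcard⟩ := hexA
  have hXRBcard : (XR B).card = t+2 := by have := hsplit B; omega
  have hABne : A ≠ B := by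
    intro h; rw [h, hXRBcard] at hAcard; omega
  have hbDA : bD A ≤ m := by
    calc bD A ≤ ∑ i, bD i := single_le_sum (fun i _ => Nat.zero_le _) (mem_univ A)
    _ = m := hsumbD
  have hXRA2 : 2 ≤ (XR A).card := by
    have h1 := hsplit A
    have h2 := hbig A
    omega
  -- rotation
  have hXRAne : (XR A).Nonempty := card_pos.1 (by omega)
  obtain ⟨q0, hq0mem⟩ := hXRAne
  have hq0 : q0 < N ∧ cp q0 ∈ Q A := by
    simp only [hXR, mem_filter, mem_range] at hq0mem
    exact hq0mem
  set ρ : ℕ → ℕ := fun x => (q0+1+x) % N with hρ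
  have hρlt : ∀ x, ρ x < N := fun x => Nat.mod_lt _ hN0
  have hρinj : ∀ x y, x < N → y < N → ρ x = ρ y → x = y := by
    intro x y hx hy he
    have h2 : x % N = y % N := Nat.ModEq.add_left_cancel' (q0+1) he
    rwa [Nat.mod_eq_of_lt hx, Nat.mod_eq_of_lt hy] at h2
  set Xx : Fin k → Finset ℕ := fun i => (range N).filter (fun x => cp (ρ x) ∈ Q i) with hXx
  have hXxmem : ∀ (i : Fin k) (x : ℕ), x ∈ Xx i ↔ (x < N ∧ cp (ρ x) ∈ Q i) := by
    intro i x; simp [hXx, mem_filter, mem_range]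
  have himg : (range N).image ρ = range N := by
    apply eq_of_subset_of_card_le
    · intro j hj
      obtain ⟨x, _, rfl⟩ := mem_image.1 hj
      exact mem_range.2 (hρlt x)
    · rw [card_image_of_injOn, card_range]
      intro a ha b hb
      exact hρinj a b (mem_range.1 ha) (mem_range.1 hb)
  have hsurjρ : ∀ j, j < N → ∃ x, x < N ∧ ρ x = j := by
    intro j hj
    have h1 : j ∈ (range N).image ρ := by rw [himg]; exact mem_range.2 hj
    obtain ⟨x, hx, he⟩ := mem_image.1 h1
    exact ⟨x, mem_range.1 hx, he⟩
  have hXxim : ∀ i, XR i = (Xx i).image ρ := by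
    intro i
    ext j
    simp only [hXR, mem_filter, mem_range, mem_image]
    constructor
    · rintro ⟨hj, hjQ⟩
      obtain ⟨x, hx, rfl⟩ := hsurjρ j hj
      exact ⟨x, (hXxmem i x).2 ⟨hx, hjQ⟩, rfl⟩
    · rintro ⟨x, hxm, rfl⟩
      obtain ⟨hx, hxQ⟩ := (hXxmem i x).1 hxm
      exact ⟨hρlt x, hxQ⟩
  have hXxcard : ∀ i, (Xx i).card = (XR i).card := by
    intro i
    rw [hXxim i, card_image_of_injOn]
    intro a ha b hb
    have ha' := ((hXxmem i a).1 ha).1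
    have hb' := ((hXxmem i b).1 hb).1
    exact hρinj a b ha' hb'
  have hAxcard : (Xx A).card ≤ t+1 := by rw [hXxcard]; exact hAcard
  have hBxcard : (Xx B).card = t+2 := by rw [hXxcard]; exact hXRBcard
  have htopA : N-1 ∈ Xx A := by
    have he : ρ (N-1) = q0 := by
      show (q0+1+(N-1)) % N = q0
      rw [show q0+1+(N-1) = q0 + N from by omega, Nat.add_mod_right, Nat.mod_eq_of_lt hq0.1]
    exact (hXxmem A (N-1)).2 ⟨by omega, by rw [he]; exact hq0.2⟩
  have hdisAB : ∀ x ∈ Xx A, x ∉ Xx B := by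
    intro x hxA hxB
    exact hABne (hQuniq _ A B ((hXxmem A x).1 hxA).2 ((hXxmem B x).1 hxB).2)
  obtain ⟨u, w, huw, hwN, huB, hwB, hAgap, hBgap⟩ :=
    adj_pair N (Xx A) (Xx B) (filter_subset _ _) hdisAB htopA (by omega)
  have huN : u < N := by omega
  -- window counting
  have hcount : ∀ W : Finset ℕ, W ⊆ range N → ∑ i, ((Xx i) ∩ W).card = W.card := by
    intro W hW
    have hWb : W = univ.biUnion (fun i => Xx i ∩ W) := by
      ext x
      simp only [mem_biUnion, mem_univ, true_and, mem_inter]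
      constructor
      · intro hx
        have hxN := mem_range.1 (hW hx)
        obtain ⟨i, hi⟩ := hQmem (cp (ρ x)) (hcpS _ (hρlt x))
        exact ⟨i, (hXxmem i x).2 ⟨hxN, hi⟩, hx⟩
      · rintro ⟨i, _, hx⟩; exact hx
    rw [show W.card = (univ.biUnion (fun i => Xx i ∩ W)).card from by rw [← hWb]]
    exact (card_biUnion (by
      intro i _ j _ hij
      rw [Function.onFun, disjoint_left]
      intro x hx1 hx2
      exact hij (hQuniq _ i j ((hXxmem i x).1 (mem_inter.1 hx1).1).2
        ((hXxmem j x).1 (mem_inter.1 hx2).1).2))).symm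
  have hQInPcard : ∀ (i : Fin k) (W : Finset ℕ), W ⊆ range N →
      (Q i ∩ (W.image (fun x => cp (ρ x)))).card = ((Xx i) ∩ W).card := by
    intro i W hW
    have he : Q i ∩ (W.image (fun x => cp (ρ x))) = ((Xx i) ∩ W).image (fun x => cp (ρ x)) := by
      ext p
      simp only [mem_inter, mem_image]
      constructor
      · rintro ⟨hpQ, x, hxW, rfl⟩
        exact ⟨x, ⟨(hXxmem i x).2 ⟨mem_range.1 (hW hxW), hpQ⟩, hxW⟩, rfl⟩
      · rintro ⟨x, ⟨hxX, hxW⟩, rfl⟩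
        exact ⟨((hXxmem i x).1 hxX).2, x, hxW, rfl⟩
    rw [he, card_image_of_injOn]
    intro a ha b hb he2
    have haN := ((hXxmem i a).1 (mem_inter.1 ha).1).1
    have hbN := ((hXxmem i b).1 (mem_inter.1 hb).1).1
    exact hρinj a b haN hbN (hcpinj _ _ (hρlt a) (hρlt b) he2)
  have hBcircle : ∀ p ∈ Q B, ∃ x, x < N ∧ p = cp (ρ x) := by
    intro p hp
    rcases hSmem p (hQsub B hp) with ⟨j, hj, rfl⟩ | ⟨l, hl, rfl⟩
    · obtain ⟨x, hx, he⟩ := hsurjρ j hj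
      exact ⟨x, hx, by rw [he]⟩
    · exfalso
      have h1 : l ∈ (range m).filter (fun l => dp l ∈ Q B) := mem_filter.2 ⟨mem_range.2 hl, hp⟩
      have h2 : 0 < ((range m).filter (fun l => dp l ∈ Q B)).card := card_pos.2 ⟨l, h1⟩
      have h3 : bD B = ((range m).filter (fun l => dp l ∈ Q B)).card := by rw [hbD]
      omega
  -- THE ATTACK ENGINE
  have attack : ∀ (lo hi : ℕ), lo ≤ hi → lo < N → hi + 1 ≤ lo + N → 2*(hi+1-lo) + 1 ≤ N →
      ∀ (iin iout : Fin k) (Y : Finset (Pt 2)), Y ⊆ S → Y.card ≤ t →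
      (∀ p ∈ Q iin \ Y, ∃ x, x < N ∧ ((lo ≤ x ∧ x ≤ hi) ∨ x + N ≤ hi) ∧ p = cp (ρ x)) →
      (∀ p ∈ Q iout \ Y, (∃ x, x < N ∧ ¬((lo ≤ x ∧ x ≤ hi) ∨ x + N ≤ hi) ∧ p = cp (ρ x)) ∨
        (∃ l, l < m ∧ p = dp l)) → False := by
    intro lo hi hlohi hloN hhiN hlen iin iout Y hYS hYc hin hout
    set ψc : ℝ := ((2*(q0+1) + lo + hi : ℕ):ℝ) * π / N with hψc
    set cR : ℝ := Real.cos (((hi:ℝ) + 1 - lo) * π / N) with hcR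
    have heval : ∀ y : ℕ, dotψ ψc (cp ((q0+1+y) % N)) = Real.cos (((2*y:ℝ) - lo - hi) * π / N) := by
      intro y
      rw [hdotc]
      rw [cos_mod N (q0+1+y) ψc]
      congr 1
      rw [hψc]
      push_cast
      field_simp
      ring
    have hρx : ∀ x : ℕ, ρ x = (q0+1+x) % N := by intro x; rw [hρ]
    have hmodN : ∀ x : ℕ, (q0+1+x) % N = (q0+1+(x+N)) % N := by
      intro x
      rw [show q0+1+(x+N) = (q0+1+x)+N from by omega, Nat.add_mod_right]
    have hcast : ((hi+1-lo : ℕ):ℝ) = (hi:ℝ) + 1 - lo := by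
      have h1 : lo ≤ hi + 1 := by omega
      rw [Nat.cast_sub h1]
      push_cast
      ring
    have hcbig : ε < cR := by
      have h2 := cap_c_big N (hi+1-lo) hN0 (by omega) (by omega)
      rw [hcast] at h2
      rw [hcR]
      calc ε < Real.sin (π/(2*N)) := hεlt
        _ ≤ _ := h2
    have hgt : ∀ x, x < N → ((lo ≤ x ∧ x ≤ hi) ∨ x + N ≤ hi) → cR < dotψ ψc (cp (ρ x)) := by
      intro x hx hIn
      rcases hIn with ⟨h1, h2⟩ | h2
      · rw [hρx, heval x]
        exact cap_in N lo hi x hN0 h1 h2 hhiN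
      · rw [hρx, hmodN, heval (x+N)]
        exact cap_in N lo hi (x+N) hN0 (by omega) h2 hhiN
    have hltc : ∀ x, x < N → ¬((lo ≤ x ∧ x ≤ hi) ∨ x + N ≤ hi) → dotψ ψc (cp (ρ x)) < cR := by
      intro x hx hOut
      have hOut1 : ¬(lo ≤ x ∧ x ≤ hi) := fun hc => hOut (Or.inl hc)
      have hOut2 : ¬(x + N ≤ hi) := fun hc => hOut (Or.inr hc)
      rcases le_or_gt lo x with hcase | hcase
      · have hhix : hi < x := by omega
        rw [hρx, heval x]
        exact cap_out N lo hi x hN0 hlohi hhix (by omega)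
      · rw [hρx, hmodN, heval (x+N)]
        exact cap_out N lo hi (x+N) hN0 hlohi (by omega) (by omega)
    apply kill htol Y hYS hYc iout iin ψc cR
    · intro p hp
      rcases hout p hp with ⟨x, hx, hOut, rfl⟩ | ⟨l, hl, rfl⟩
      · exact hltc x hx hOut
      · have h1 := hdotd l ψc hl
        have h2 := abs_lt.1 h1
        linarith [hcbig]
    · intro p hp
      obtain ⟨x, hx, hIn, rfl⟩ := hin p hp
      exact hgt x hx hIn
  -- CASE ANALYSIS
  rcases le_or_gt (2*(w+1-u)+1) N with hcasea | hcaseb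
  · -- CASE (a) : short gap, separate A from B directly
    set W1 := (range N).filter (fun x => (u ≤ x ∧ x ≤ w) ∨ x + N ≤ w) with hW1
    have hW1sub : W1 ⊆ range N := filter_subset _ _
    set InP1 := W1.image (fun x => cp (ρ x)) with hInP1
    set Y := Q B \ InP1 with hYdef1
    have huW1 : u ∈ W1 := by
      rw [hW1]; exact mem_filter.2 ⟨mem_range.2 (by omega), by omega⟩
    have hwW1 : w ∈ W1 := by
      rw [hW1]; exact mem_filter.2 ⟨mem_range.2 (by omega), by omega⟩
    have hpair : 2 ≤ (Q B ∩ InP1).card := by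
      have hsubpair : ({cp (ρ u), cp (ρ w)} : Finset (Pt 2)) ⊆ Q B ∩ InP1 := by
        intro p hp
        rcases mem_insert.1 hp with rfl | hp2
        · exact mem_inter.2 ⟨((hXxmem B u).1 huB).2, by rw [hInP1]; exact mem_image_of_mem _ huW1⟩
        · rw [mem_singleton] at hp2
          subst hp2
          exact mem_inter.2 ⟨((hXxmem B w).1 hwB).2, by rw [hInP1]; exact mem_image_of_mem _ hwW1⟩
      have hne2 : cp (ρ u) ≠ cp (ρ w) := by
        intro he
        exact (by omega : u ≠ w) (hρinj u w (by omega) (by omega) (hcpinj _ _ (hρlt u) (hρlt w) he))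
      calc 2 = ({cp (ρ u), cp (ρ w)} : Finset (Pt 2)).card := by
            rw [card_insert_of_notMem (by simpa using hne2), card_singleton]
        _ ≤ _ := card_le_card hsubpair
    have hYcard : Y.card ≤ t := by
      have h1 := card_inter_add_card_sdiff (Q B) InP1
      rw [hYdef1]
      omega
    apply attack u w (by omega) (by omega) (by omega) hcasea B A Y
      (fun p hp => hQsub B (sdiff_subset hp)) hYcard
    · intro p hp
      obtain ⟨hpB, hpY⟩ := mem_sdiff.1 hp
      have hpIn : p ∈ InP1 := by
        by_contra hno
        exact hpY (by rw [hYdef1]; exact mem_sdiff.2 ⟨hpB, hno⟩)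
      rw [hInP1] at hpIn
      obtain ⟨x, hxW, rfl⟩ := mem_image.1 hpIn
      rw [hW1] at hxW
      exact ⟨x, mem_range.1 (mem_filter.1 hxW).1, (mem_filter.1 hxW).2, rfl⟩
    · intro p hp
      have hpA := (mem_sdiff.1 hp).1
      rcases hSmem p (hQsub A hpA) with ⟨j, hj, rfl⟩ | ⟨l, hl, rfl⟩
      · left
        obtain ⟨x, hx, he⟩ := hsurjρ j hj
        refine ⟨x, hx, ?_, by rw [he]⟩
        intro hIn
        have hxA : x ∈ Xx A := (hXxmem A x).2 ⟨hx, by rw [he]; exact hpA⟩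
        rcases hIn with ⟨h1, h2⟩ | h2
        · exact hAgap x hxA ⟨h1, h2⟩
        · omega
      · right; exact ⟨l, hl, rfl⟩
  rcases le_or_gt (2*(u+1+(N-w))+1) N with hcasebi | hcasebii
  · -- CASE (b-i) : B is confined to a short arc
    set W2 := (range N).filter (fun x => (w ≤ x ∧ x ≤ N+u) ∨ x + N ≤ N+u) with hW2
    have hW2sub : W2 ⊆ range N := filter_subset _ _
    set InP2 := W2.image (fun x => cp (ρ x)) with hInP2
    have hcnt : ∀ i : Fin k, i ≠ B → t+1 ≤ ((Xx i) ∩ W2).card := by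
      intro i hiB
      by_contra hcon
      push_neg at hcon
      have hYc2 : (Q i ∩ InP2).card ≤ t := by
        rw [hInP2, hQInPcard i W2 hW2sub]
        omega
      apply attack w (N+u) (by omega) (by omega) (by omega) (by omega) B i (Q i ∩ InP2)
        (fun p hp => hQsub i (mem_inter.1 hp).1) hYc2
      · intro p hp
        have hpB := (mem_sdiff.1 hp).1
        obtain ⟨x, hx, rfl⟩ := hBcircle p hpB
        refine ⟨x, hx, ?_, rfl⟩
        have hxB : x ∈ Xx B := (hXxmem B x).2 ⟨hx, hpB⟩
        have hgap := hBgap x hxB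
        omega
      · intro p hp
        have hpQ := (mem_sdiff.1 hp).1
        have hpY := (mem_sdiff.1 hp).2
        rcases hSmem p (hQsub i hpQ) with ⟨j, hj, rfl⟩ | ⟨l, hl, rfl⟩
        · left
          obtain ⟨x, hx, he⟩ := hsurjρ j hj
          refine ⟨x, hx, ?_, by rw [he]⟩
          intro hIn
          apply hpY
          refine mem_inter.2 ⟨hpQ, ?_⟩
          rw [hInP2]
          refine mem_image.2 ⟨x, ?_, by rw [he]⟩
          rw [hW2]
          exact mem_filter.2 ⟨mem_range.2 hx, hIn⟩
        · right; exact ⟨l, hl, rfl⟩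
    have hsumW2 := hcount W2 hW2sub
    have hBsubW2 : Xx B ∩ W2 = Xx B := by
      apply inter_eq_left.2
      intro x hxB
      have hxN := ((hXxmem B x).1 hxB).1
      have hgap := hBgap x hxB
      rw [hW2]
      exact mem_filter.2 ⟨mem_range.2 hxN, by omega⟩
    have hW2card : W2.card = u + 1 + (N - w) := by
      rw [hW2]
      have he0 : (range N).filter (fun x => (w ≤ x ∧ x ≤ N+u) ∨ x + N ≤ N+u)
          = (range N).filter (fun x => x ≤ u ∨ w ≤ x) := by
        apply filter_congr
        intro x hx
        have hxN := mem_range.1 hx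
        constructor <;> intro h <;> omega
      rw [he0, filter_or, card_union_of_disjoint]
      · have e1 : (range N).filter (fun x => x ≤ u) = range (u+1) := by
          ext x; simp only [mem_filter, mem_range]; omega
        have e2 : (range N).filter (fun x => w ≤ x) = Ico w N := by
          ext x; simp only [mem_filter, mem_range, mem_Ico]; omega
        rw [e1, e2, card_range, Nat.card_Ico]
      · rw [disjoint_left]
        intro x hx1 hx2
        have h1 := (mem_filter.1 hx1).2
        have h2 := (mem_filter.1 hx2).2
        omega
    have hsum2 : (t+2) + ∑ i ∈ univ.erase B, ((Xx i) ∩ W2).card = W2.card := by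
      rw [← hsumW2, ← add_sum_erase univ (fun i => ((Xx i) ∩ W2).card) (mem_univ B)]
      rw [hBsubW2, hBxcard]
    have hsum3 : (k-1)*(t+1) ≤ ∑ i ∈ univ.erase B, ((Xx i) ∩ W2).card := by
      have h1 : ∑ _i ∈ univ.erase B, (t+1) ≤ ∑ i ∈ univ.erase B, ((Xx i) ∩ W2).card :=
        sum_le_sum (fun i hi => hcnt i (ne_of_mem_erase hi))
      rwa [sum_const, card_erase_of_mem (mem_univ B), card_univ, Fintype.card_fin, smul_eq_mul] at h1
    have hprod : (k-1)*(t+1) + (t+1) = KT + k := by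
      have h1 : (k-1)*(t+1) + 1*(t+1) = ((k-1)+1)*(t+1) := (add_mul _ _ _).symm
      rw [one_mul] at h1
      rw [h1, show (k-1)+1 = k from by omega, hkt1]
    obtain ⟨E1, hE1⟩ : ∃ x : ℕ, x = ∑ i ∈ univ.erase B, ((Xx i) ∩ W2).card := ⟨_, rfl⟩
    rw [← hE1] at hsum2 hsum3
    have hE2 : KT + k ≤ E1 + (t+1) := by
      calc KT + k = (k-1)*(t+1) + (t+1) := hprod.symm
        _ ≤ E1 + (t+1) := Nat.add_le_add_right hsum3 _
    rw [hW2card] at hsum2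
    omega
  · -- CASE (b-ii) : two long arcs, use a third part
    set L := (N-1)/2 with hL
    have hLk : k + m - 1 ≤ L := by omega
    set r4 := min (w - 1 - u) L with hr4
    have hr4low : k + m - 2 ≤ r4 := by omega
    have hr4w : u + r4 + 1 ≤ w := by omega
    have hr4N : 2*r4 + 1 ≤ N := by omega
    have hr4pos : 1 ≤ r4 := by omega
    set W4 := (range N).filter (fun x => ((u+1) ≤ x ∧ x ≤ u + r4) ∨ x + N ≤ u + r4) with hW4
    have hW4sub : W4 ⊆ range N := filter_subset _ _
    set InP4 := W4.image (fun x => cp (ρ x)) with hInP4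
    have hW4card : W4.card = r4 := by
      rw [hW4]
      have e1 : (range N).filter (fun x => ((u+1) ≤ x ∧ x ≤ u + r4) ∨ x + N ≤ u + r4)
          = Icc (u+1) (u+r4) := by
        ext x
        simp only [mem_filter, mem_range, mem_Icc]
        omega
      rw [e1, Nat.card_Icc]
      omega
    have hAW4 : ∀ i : Fin k, (i = A ∨ i = B) → Xx i ∩ W4 = ∅ := by
      intro i hi
      rw [eq_empty_iff_forall_notMem]
      intro x hx
      obtain ⟨hx1, hx2⟩ := mem_inter.1 hx
      rw [hW4] at hx2
      have hx3 := (mem_filter.1 hx2).2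
      have hxN := mem_range.1 (mem_filter.1 hx2).1
      rcases hi with rfl | rfl
      · exact hAgap x hx1 (by omega)
      · exact hBgap x hx1 (by omega)
    have hkey : ∃ P : Fin k, P ≠ A ∧ P ≠ B ∧ (Q P).card ≤ ((Xx P) ∩ W4).card + t := by
      by_contra hno
      push_neg at hno
      have hBmem : B ∈ univ.erase A := mem_erase.2 ⟨Ne.symm hABne, mem_univ B⟩
      set s2 := (univ.erase A).erase B with hs2
      have hs2card : s2.card = k - 2 := by
        rw [hs2, card_erase_of_mem hBmem, card_erase_of_mem (mem_univ A), card_univ, Fintype.card_fin]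
        omega
      have hsumW4 := hcount W4 hW4sub
      have hzA : ((Xx A) ∩ W4).card = 0 := by rw [hAW4 A (Or.inl rfl)]; rfl
      have hzB : ((Xx B) ∩ W4).card = 0 := by rw [hAW4 B (Or.inr rfl)]; rfl
      have h1 : ∑ i, ((Xx i) ∩ W4).card
          = ((Xx A) ∩ W4).card + ∑ i ∈ univ.erase A, ((Xx i) ∩ W4).card :=
        (add_sum_erase _ _ (mem_univ A)).symm
      have h2 : ∑ i ∈ univ.erase A, ((Xx i) ∩ W4).card
          = ((Xx B) ∩ W4).card + ∑ i ∈ s2, ((Xx i) ∩ W4).card :=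
        (add_sum_erase _ _ hBmem).symm
      rw [h1, h2, hzA, hzB, hW4card] at hsumW4
      simp only [zero_add] at hsumW4
      have h1' : ∑ i, (Q i).card = (Q A).card + ∑ i ∈ univ.erase A, (Q i).card :=
        (add_sum_erase _ _ (mem_univ A)).symm
      have h2' : ∑ i ∈ univ.erase A, (Q i).card = (Q B).card + ∑ i ∈ s2, (Q i).card :=
        (add_sum_erase _ _ hBmem).symm
      have hQs2 : (Q A).card + ((Q B).card + ∑ i ∈ s2, (Q i).card) = N + m := by
        rw [← h2', ← h1', hsumQ]
      have hsum6 : ∑ i ∈ s2, (((Xx i) ∩ W4).card + (t+1)) ≤ ∑ i ∈ s2, (Q i).card := by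
        apply sum_le_sum
        intro i hi
        have hiB : i ≠ B := (mem_erase.1 hi).1
        have hiA : i ≠ A := (mem_erase.1 (mem_of_mem_erase hi)).1
        have h3 := hno i hiA hiB
        omega
      rw [sum_add_distrib, sum_const, hs2card, smul_eq_mul] at hsum6
      have hprod2 : (k-2)*(t+1) + 2*(t+1) = KT + k := by
        have ha : (k-2)*(t+1) + 2*(t+1) = ((k-2)+2)*(t+1) := (add_mul _ _ _).symm
        rw [ha, show (k-2)+2 = k from by omega, hkt1]
      obtain ⟨E2, hE2⟩ : ∃ x : ℕ, x = ∑ i ∈ s2, (Q i).card := ⟨_, rfl⟩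
      obtain ⟨F2, hF2⟩ : ∃ x : ℕ, x = ∑ i ∈ s2, ((Xx i) ∩ W4).card := ⟨_, rfl⟩
      rw [← hE2, ← hF2] at hsum6
      rw [← hF2] at hsumW4
      rw [← hE2] at hQs2
      have h9 : F2 + (k-2)*(t+1) + 2*(t+1) ≤ E2 + 2*(t+1) := by
        have := Nat.add_le_add_right hsum6 (2*(t+1))
        omega
      rw [add_assoc, hprod2] at h9
      have hQA := hbig A
      omega
    obtain ⟨P, hPA, hPB, hPcard⟩ := hkey
    have hYc4 : (Q P \ InP4).card ≤ t := by
      have h1 := card_inter_add_card_sdiff (Q P) InP4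
      have h2 : (Q P ∩ InP4).card = ((Xx P) ∩ W4).card := by
        rw [hInP4]; exact hQInPcard P W4 hW4sub
      omega
    apply attack (u+1) (u+r4) (by omega) (by omega) (by omega) (by omega) P A (Q P \ InP4)
      (fun p hp => hQsub P (sdiff_subset hp)) hYc4
    · intro p hp
      obtain ⟨hpP, hpY⟩ := mem_sdiff.1 hp
      have hpIn : p ∈ InP4 := by
        by_contra hno2
        exact hpY (mem_sdiff.2 ⟨hpP, hno2⟩)
      rw [hInP4] at hpIn
      obtain ⟨x, hxW, rfl⟩ := mem_image.1 hpIn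
      rw [hW4] at hxW
      exact ⟨x, mem_range.1 (mem_filter.1 hxW).1, (mem_filter.1 hxW).2, rfl⟩
    · intro p hp
      have hpA := (mem_sdiff.1 hp).1
      rcases hSmem p (hQsub A hpA) with ⟨j, hj, rfl⟩ | ⟨l, hl, rfl⟩
      · left
        obtain ⟨x, hx, he⟩ := hsurjρ j hj
        refine ⟨x, hx, ?_, by rw [he]⟩
        intro hIn
        have hxA : x ∈ Xx A := (hXxmem A x).2 ⟨hx, by rw [he]; exact hpA⟩
        rcases hIn with ⟨h1, h2⟩ | h2
        · exact hAgap x hxA (by omega)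
        · omega
      · right; exact ⟨l, hl, rfl⟩
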